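/- Let G be a locally finite tree and consider a transient rotor walk started at a with sink Z and final rotor configuration ξ. If x lies on the maximal forward path P(a,ξ) and x is incomplete in ξ, then all vertices visited by the walk up to and including the last visit of x lie in W(ξ,x), the set of vertices from which there is a directed path to x in ξ. -/

import Mathlib

open MeasureTheory Filter ENNReal Set

namespace RotorWalk

variable {V : Type*} [DecidableEq V]

/-- One step of the rotor walk with local mechanisms `τ`:
the rotor at the current position is advanced and the walker follows it. -/
def step (τ : V → V → V) (p : V × (V → V)) : V × (V → V) :=
  (τ p.1 (p.2 p.1), Function.update p.2 p.1 (τ p.1 (p.2 p.1)))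

/-- Trajectory (position, rotor configuration) of the rotor walk started at `a`
with initial rotor configuration `ρ`. -/
def traj (τ : V → V → V) (a : V) (ρ : V → V) : ℕ → V × (V → V)
  | 0 => (a, ρ)
  | t + 1 => step τ (traj τ a ρ t)

/-- Position of the walker at time `t`. -/
def pos (τ : V → V → V) (a : V) (ρ : V → V) (t : ℕ) : V := (traj τ a ρ t).1

/-- Rotor configuration at time `t`. -/
def conf (τ : V → V → V) (a : V) (ρ : V → V) (t : ℕ) : V → V := (traj τ a ρ t).2

/-- The walk has not hit the sink `Z` up to and including time `t`. -/
def aliveAt (τ : V → V → V) (Z : Set V) (a : V) (ρ : V → V) (t : ℕ) : Prop :=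
  ∀ s ≤ t, pos τ a ρ s ∉ Z

/-- Odometer: the number of visits to `x` strictly before hitting the sink `Z`. -/
noncomputable def odometer (τ : V → V → V) (Z : Set V) (a : V) (ρ : V → V) (x : V) : ℕ∞ :=
  {t : ℕ | aliveAt τ Z a ρ t ∧ pos τ a ρ t = x}.encard

/-- Number of traversals of the directed edge `(y, x)` strictly before hitting `Z`. -/
noncomputable def edgeCount (τ : V → V → V) (Z : Set V) (a : V) (ρ : V → V) (y x : V) : ℕ∞ :=
  {t : ℕ | aliveAt τ Z a ρ t ∧ pos τ a ρ t = y ∧ pos τ a ρ (t + 1) = x}.encard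

open Classical in
/-- The final rotor configuration: the configuration at the hitting time of `Z` if the walk
hits `Z`, and otherwise the pointwise eventual value of the rotor configuration
(which exists when the walk is transient). -/
noncomputable def finalConf (τ : V → V → V) (Z : Set V) (a : V) (ρ : V → V) : V → V :=
  if ∃ t, pos τ a ρ t ∈ Z then conf τ a ρ (sInf {t | pos τ a ρ t ∈ Z})
  else fun x => if h : ∃ v, ∀ᶠ t in atTop, conf τ a ρ t x = v then h.choose else ρ x

/-- Total number of visits to `x` by `n` sequential rotor walks (rotors not reset). -/
noncomputable def Svis (τ : V → V → V) (Z : Set V) (a : V) (ρ : V → V) (n : ℕ) (x : V) : ℕ∞ :=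
  ∑ i ∈ Finset.range n, odometer τ Z a ((finalConf τ Z a)^[i] ρ) x

/-- Total number of traversals of the directed edge `(y,x)` by `n` sequential rotor walks. -/
noncomputable def Sedge (τ : V → V → V) (Z : Set V) (a : V) (ρ : V → V) (n : ℕ) (y x : V) : ℕ∞ :=
  ∑ i ∈ Finset.range n, edgeCount τ Z a ((finalConf τ Z a)^[i] ρ) y x

/-- The rotor walk is transient: every vertex is visited finitely often (before hitting `Z`). -/
def IsTransientWalk (τ : V → V → V) (Z : Set V) (a : V) (ρ : V → V) : Prop :=
  ∀ x : V, {t : ℕ | aliveAt τ Z a ρ t ∧ pos τ a ρ t = x}.Finite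

open Classical in
/-- Total number of visits to `x` by `n` sequential rotor walks with empty sink,
set to `⊤` if one of the `n` walks fails to be transient. -/
noncomputable def SvisT (τ : V → V → V) (a : V) (ρ : V → V) (n : ℕ) (x : V) : ℕ∞ :=
  if ∀ i < n, IsTransientWalk τ ∅ a ((finalConf τ ∅ a)^[i] ρ) then Svis τ ∅ a ρ n x else ⊤

/-- The local mechanisms map neighbors to neighbors and have a single orbit on each
neighborhood (off the sink). -/
def ValidMechanism (G : SimpleGraph V) (Z : Set V) (τ : V → V → V) : Prop :=
  ∀ x ∉ Z, (∀ y, G.Adj x y → G.Adj x (τ x y)) ∧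
    ∀ y, G.Adj x y → ∀ z, G.Adj x z → ∃ i : ℕ, (τ x)^[i] y = z

/-- A rotor configuration: every rotor (off the sink) points to a neighbor. -/
def ValidConfig (G : SimpleGraph V) (Z : Set V) (ρ : V → V) : Prop :=
  ∀ x ∉ Z, G.Adj x (ρ x)

/-- Time-`t` distribution of the simple random walk started at `a` and killed on `Z`. -/
noncomputable def srw (G : SimpleGraph V) [G.LocallyFinite] (Z : Set V) (a : V) :
    ℕ → V → ℝ≥0∞
  | 0 => Set.indicator {a} 1
  | t + 1 => fun x =>
      ∑' y : V, Set.indicator {y | G.Adj y x ∧ y ∉ Z}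
        (fun y => srw G Z a t y / (G.degree y : ℝ≥0∞)) y

/-- Green function: the expected number of visits to a vertex, strictly before hitting `Z`,
of the simple random walk started at `a`. -/
noncomputable def green (G : SimpleGraph V) [G.LocallyFinite] (Z : Set V) (a : V) : V → ℝ≥0∞ :=
  Set.indicator Zᶜ (fun x => ∑' t : ℕ, srw G Z a t x)

/-- The graph is transient: the Green function (with empty sink) is finite. -/
def TransientGraph (G : SimpleGraph V) [G.LocallyFinite] : Prop :=
  ∀ a x : V, green G ∅ a x < ⊤

/-- A `Z`-oriented spanning forest, encoded as a rotor configuration: off `Z` it points to a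
neighbor, on `Z` it is normalized to the identity, and every vertex eventually reaches `Z`. -/
def IsOSF (G : SimpleGraph V) (Z : Set V) (ρ : V → V) : Prop :=
  (∀ x ∉ Z, G.Adj x (ρ x)) ∧ (∀ x ∈ Z, ρ x = x) ∧ ∀ x : V, ∃ n : ℕ, ρ^[n] x ∈ Z

/-- An oriented spanning forest of an infinite graph: every vertex has out-degree one along
an edge and there is no directed cycle. -/
def IsOSFInf (G : SimpleGraph V) (ρ : V → V) : Prop :=
  (∀ x, G.Adj x (ρ x)) ∧ ∀ x : V, ∀ n > 0, ρ^[n] x ≠ x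

/-- A spanning forest of the ball of radius `R` around `a`, oriented toward the boundary
sphere (the sink), normalized to the identity outside the open ball. -/
def IsOSFBall (G : SimpleGraph V) (a : V) (R : ℕ) (ρ : V → V) : Prop :=
  (∀ x, G.dist a x < R → G.Adj x (ρ x)) ∧
  (∀ x, ¬ G.dist a x < R → ρ x = x) ∧
  ∀ x, G.dist a x < R → ∃ n : ℕ, G.dist a (ρ^[n] x) = R

instance : MeasurableSpace (V → V) := ⊤

/-- `μ` is the oriented wired uniform spanning forest measure of `G` (with respect to the
exhaustion by balls around `a`): it is a probability measure supported on oriented spanning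
forests whose finite-dimensional marginals are the limits of the uniform measures on
boundary-oriented spanning forests of the balls. -/
def IsOWUSF (G : SimpleGraph V) (a : V) (μ : Measure (V → V)) : Prop :=
  IsProbabilityMeasure μ ∧
  (∀ᵐ ρ ∂μ, IsOSFInf G ρ) ∧
  ∀ B : Finset (V × V),
    Tendsto (fun R : ℕ =>
        (({ρ : V → V | IsOSFBall G a R ρ ∧ ∀ e ∈ B, ρ e.1 = e.2}.ncard : ℝ) /
          ({ρ : V → V | IsOSFBall G a R ρ}.ncard : ℝ))) atTop
      (nhds ((μ {ρ : V → V | ∀ e ∈ B, ρ e.1 = e.2}).toReal))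

/-- Vertex-transitivity. -/
def VertexTransitive (G : SimpleGraph V) : Prop :=
  ∀ u v : V, ∃ φ : G ≃g G, φ u = v

/-- `μ` is stationary for the rotor walk (empty sink) started at `a`: almost every walk is
transient and the final rotor configuration again has law `μ`. -/
def RWStationary (τ : V → V → V) (a : V) (μ : Measure (V → V)) : Prop :=
  (∀ᵐ ρ ∂μ, IsTransientWalk τ ∅ a ρ) ∧ μ.map (finalConf τ ∅ a) = μ

/-- `u` and `v` lie in the same (weak) component of the oriented subgraph given by `ξ`. -/
def sameTree (ξ : V → V) (u v : V) : Prop :=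
  Relation.ReflTransGen (fun p q => ξ p = q ∨ ξ q = p) u v

/-- `x` is incomplete in `ξ`: some `G`-neighbor of `x` is not in the `ξ`-component of `x`. -/
def Incomplete (G : SimpleGraph V) (ξ : V → V) (x : V) : Prop :=
  ∃ y, G.Adj x y ∧ ¬ sameTree ξ x y

/-- Last visit time of `x` by the rotor walk terminated upon hitting `Z`. -/
noncomputable def lastVisit (τ : V → V → V) (Z : Set V) (a : V) (ρ : V → V) (x : V) : ℕ :=
  sSup {t | (∀ s < t, pos τ a ρ s ∉ Z) ∧ pos τ a ρ t = x}

/-- The set of vertices having a directed `ξ`-path to `x`. -/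
def W (ξ : V → V) (x : V) : Set V :=
  {y | Relation.ReflTransGen (fun p q => ξ p = q) y x}

section AuxiliaryLemmas

/-! ### Auxiliary lemmas for Statement 15 -/

-- pure arithmetic/combinatorial crossing lemma
lemma exists_crossing' {Q : ℕ → Prop} :
    ∀ {n : ℕ}, Q 0 → ¬ Q n → ∃ j, j < n ∧ Q j ∧ ¬ Q (j + 1) := by
  intro n
  induction n with
  | zero => intro h0 hn; exact absurd h0 hn
  | succ n ih =>
    intro h0 hn
    by_cases hQn : Q n
    · exact ⟨n, Nat.lt_succ_self n, hQn, hn⟩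
    · obtain ⟨j, hj, h1, h2⟩ := ih h0 hQn
      exact ⟨j, hj.trans (Nat.lt_succ_self n), h1, h2⟩

section Walk

variable (τ : V → V → V) (Z : Set V) (a : V) (ρ : V → V)

lemma pos_zero : pos τ a ρ 0 = a := rfl

lemma pos_succ (t : ℕ) :
    pos τ a ρ (t + 1) = τ (pos τ a ρ t) (conf τ a ρ t (pos τ a ρ t)) := rfl

lemma conf_zero : conf τ a ρ 0 = ρ := rfl

lemma conf_succ (t : ℕ) :
    conf τ a ρ (t + 1) =
      Function.update (conf τ a ρ t) (pos τ a ρ t)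
        (τ (pos τ a ρ t) (conf τ a ρ t (pos τ a ρ t))) := rfl

/-- Number of visits to `y` strictly before time `t`. -/
def cnt (y : V) (t : ℕ) : ℕ := ((Finset.range t).filter fun s => pos τ a ρ s = y).card

lemma cnt_zero (y : V) : cnt τ a ρ y 0 = 0 := by simp [cnt]

lemma cnt_succ (y : V) (t : ℕ) :
    cnt τ a ρ y (t + 1) =
      if pos τ a ρ t = y then cnt τ a ρ y t + 1 else cnt τ a ρ y t := by
  unfold cnt
  rw [Finset.range_add_one, Finset.filter_insert]
  split
  · rw [Finset.card_insert_of_notMem (by simp)]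
  · rfl

lemma cnt_mono (y : V) : Monotone (cnt τ a ρ y) := fun s t h =>
  Finset.card_le_card (Finset.filter_subset_filter _ (Finset.range_subset_range.2 h))

lemma cnt_congr (y : V) {t t' : ℕ} (h : t ≤ t')
    (hno : ∀ s, t ≤ s → s < t' → pos τ a ρ s ≠ y) :
    cnt τ a ρ y t' = cnt τ a ρ y t := by
  induction t' with
  | zero =>
    have ht0 : t = 0 := by omega
    rw [ht0]
  | succ t' ih =>
    rcases Nat.lt_or_ge t (t' + 1) with hlt | hge
    · have ht' : t ≤ t' := by omega
      rw [cnt_succ, if_neg (hno t' ht' (Nat.lt_succ_self t'))]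
      exact ih ht' (fun s hs1 hs2 => hno s hs1 (by omega))
    · have ht1 : t = t' + 1 := by omega
      rw [ht1]

lemma conf_eq_iterate (y : V) (t : ℕ) :
    conf τ a ρ t y = (τ y)^[cnt τ a ρ y t] (ρ y) := by
  induction t with
  | zero => simp [cnt, conf_zero]
  | succ t ih =>
    rw [conf_succ, cnt_succ]
    by_cases h : pos τ a ρ t = y
    · rw [if_pos h, h, Function.update_self, ih, Function.iterate_succ_apply']
    · rw [if_neg h, Function.update_of_ne (fun hy => h hy.symm), ih]

lemma pos_succ_iterate {y : V} {t : ℕ} (h : pos τ a ρ t = y) :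
    pos τ a ρ (t + 1) = (τ y)^[cnt τ a ρ y t + 1] (ρ y) := by
  rw [pos_succ, h, conf_eq_iterate, Function.iterate_succ_apply']

variable {G : SimpleGraph V}

lemma valid_conf (hτ : ValidMechanism G Z τ) (hρ : ValidConfig G Z ρ) (t : ℕ) :
    ValidConfig G Z (conf τ a ρ t) := by
  induction t with
  | zero => exact hρ
  | succ t ih =>
    intro x hx
    rw [conf_succ]
    by_cases h : x = pos τ a ρ t
    · subst h
      rw [Function.update_self]
      exact (hτ _ hx).1 _ (ih _ hx)
    · rw [Function.update_of_ne h]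
      exact ih x hx

lemma adj_pos_succ (hτ : ValidMechanism G Z τ) (hρ : ValidConfig G Z ρ) {t : ℕ}
    (h : pos τ a ρ t ∉ Z) : G.Adj (pos τ a ρ t) (pos τ a ρ (t + 1)) := by
  rw [pos_succ]
  exact (hτ _ h).1 _ (valid_conf τ Z a ρ hτ hρ t _ h)

/-- The set of "good" visit times to `y`: times with an alive prefix. -/
def LVset (y : V) : Set ℕ :=
  {t | (∀ s < t, pos τ a ρ s ∉ Z) ∧ pos τ a ρ t = y}

lemma lastVisit_eq (y : V) : lastVisit τ Z a ρ y = sSup (LVset τ Z a ρ y) := rfl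

lemma lvset_bddAbove (hwalk : IsTransientWalk τ Z a ρ) {y : V} (hy : y ∉ Z) :
    BddAbove (LVset τ Z a ρ y) := by
  by_cases hhit : ∃ t, pos τ a ρ t ∈ Z
  · obtain ⟨t₀, ht₀⟩ := hhit
    refine ⟨t₀, fun t ht => ?_⟩
    by_contra hlt
    exact ht.1 t₀ (by omega) ht₀
  · push_neg at hhit
    have he : LVset τ Z a ρ y = {t : ℕ | aliveAt τ Z a ρ t ∧ pos τ a ρ t = y} := by
      ext t; simp [LVset, aliveAt, hhit]
    rw [he]
    exact (hwalk y).bddAbove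

lemma finalConf_eq_pos (hwalk : IsTransientWalk τ Z a ρ) {y : V} (hy : y ∉ Z)
    (hne : (LVset τ Z a ρ y).Nonempty) :
    finalConf τ Z a ρ y = pos τ a ρ (sSup (LVset τ Z a ρ y) + 1) := by
  set L := sSup (LVset τ Z a ρ y) with hL
  have hbdd := lvset_bddAbove τ Z a ρ hwalk hy
  have hLmem : L ∈ LVset τ Z a ρ y := Nat.sSup_mem hne hbdd
  have hGL1 : ∀ u < L + 1, pos τ a ρ u ∉ Z := by
    intro u hu
    rcases Nat.lt_succ_iff_lt_or_eq.mp hu with h | h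
    · exact hLmem.1 u h
    · rw [h, hLmem.2]; exact hy
  have hconfL1 : conf τ a ρ (L + 1) y = pos τ a ρ (L + 1) := by
    rw [conf_succ, pos_succ, hLmem.2, Function.update_self]
  have key : ∀ m, L + 1 ≤ m → (∀ u < m, pos τ a ρ u ∉ Z) →
      conf τ a ρ m y = pos τ a ρ (L + 1) := by
    intro m hm hGm
    have hc : cnt τ a ρ y m = cnt τ a ρ y (L + 1) := by
      refine cnt_congr τ a ρ y hm (fun s hs1 hs2 hps => ?_)
      have : s ∈ LVset τ Z a ρ y := ⟨fun u hu => hGm u (by omega), hps⟩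
      have := le_csSup hbdd this
      omega
    rw [conf_eq_iterate, hc, ← conf_eq_iterate]
    exact hconfL1
  by_cases hhit : ∃ t, pos τ a ρ t ∈ Z
  · rw [finalConf, if_pos hhit]
    have hT₀mem : pos τ a ρ (sInf {t | pos τ a ρ t ∈ Z}) ∈ Z := Nat.sInf_mem hhit
    have hT₀min : ∀ u < sInf {t | pos τ a ρ t ∈ Z}, pos τ a ρ u ∉ Z := fun u hu =>
      Nat.notMem_of_lt_sInf hu
    have hle : L + 1 ≤ sInf {t | pos τ a ρ t ∈ Z} := by
      by_contra hlt
      exact hGL1 _ (by omega) hT₀mem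
    exact key _ hle hT₀min
  · rw [finalConf, if_neg hhit]
    push_neg at hhit
    have hev : ∀ᶠ t in Filter.atTop, conf τ a ρ t y = pos τ a ρ (L + 1) :=
      Filter.eventually_atTop.2 ⟨L + 1, fun m hm => key m hm (fun u _ => hhit u)⟩
    have h : ∃ v, ∀ᶠ t in Filter.atTop, conf τ a ρ t y = v := ⟨_, hev⟩
    rw [dif_pos h]
    obtain ⟨t, h1, h2⟩ := (h.choose_spec.and hev).exists
    rw [← h1, h2]

lemma finalConf_eq_rho (hwalk : IsTransientWalk τ Z a ρ) {y : V} (hy : y ∉ Z)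
    (hemp : ¬ (LVset τ Z a ρ y).Nonempty) :
    finalConf τ Z a ρ y = ρ y := by
  have key : ∀ m, (∀ u < m, pos τ a ρ u ∉ Z) → conf τ a ρ m y = ρ y := by
    intro m hGm
    have hc : cnt τ a ρ y m = cnt τ a ρ y 0 := by
      refine cnt_congr τ a ρ y (Nat.zero_le m) (fun s _ hs2 hps => ?_)
      exact hemp ⟨s, fun u hu => hGm u (by omega), hps⟩
    rw [conf_eq_iterate, hc, cnt_zero]
    rfl
  by_cases hhit : ∃ t, pos τ a ρ t ∈ Z
  · rw [finalConf, if_pos hhit]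
    exact key _ (fun u hu => Nat.notMem_of_lt_sInf hu)
  · rw [finalConf, if_neg hhit]
    push_neg at hhit
    have hev : ∀ᶠ t in Filter.atTop, conf τ a ρ t y = ρ y :=
      Filter.eventually_atTop.2 ⟨0, fun m _ => key m (fun u _ => hhit u)⟩
    have h : ∃ v, ∀ᶠ t in Filter.atTop, conf τ a ρ t y = v := ⟨_, hev⟩
    rw [dif_pos h]
    obtain ⟨t, h1, h2⟩ := (h.choose_spec.and hev).exists
    rw [← h1, h2]

lemma valid_finalConf (hτ : ValidMechanism G Z τ) (hρ : ValidConfig G Z ρ)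
    (hwalk : IsTransientWalk τ Z a ρ) :
    ValidConfig G Z (finalConf τ Z a ρ) := by
  intro y hy
  by_cases hne : (LVset τ Z a ρ y).Nonempty
  · rw [finalConf_eq_pos τ Z a ρ hwalk hy hne]
    set L := sSup (LVset τ Z a ρ y)
    have hLmem : L ∈ LVset τ Z a ρ y :=
      Nat.sSup_mem hne (lvset_bddAbove τ Z a ρ hwalk hy)
    have : G.Adj (pos τ a ρ L) (pos τ a ρ (L + 1)) :=
      adj_pos_succ τ Z a ρ hτ hρ (hLmem.2 ▸ hy)
    rwa [hLmem.2] at this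
  · rw [finalConf_eq_rho τ Z a ρ hwalk hy hne]
    exact hρ y hy

end Walk

section TreeSide

variable {G : SimpleGraph V}

/-- The side of the edge `{x,z}` containing `z`, in a tree: vertices that cannot
reach `x` without the edge `{x,z}`. -/
def Side (G : SimpleGraph V) (x z : V) : Set V :=
  {y | ¬ (G.deleteEdges {s(x, z)}).Reachable y x}

lemma not_mem_Side_self {x z : V} : x ∉ Side G x z := fun h => h (SimpleGraph.Reachable.refl x)

lemma mem_Side (hac : G.IsAcyclic) {x z : V} (h : G.Adj x z) : z ∈ Side G x z := by
  have hb := (SimpleGraph.isAcyclic_iff_forall_adj_isBridge.mp hac) h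
  rw [SimpleGraph.isBridge_iff] at hb
  exact fun h' => hb h'.symm

lemma Side_crossing (hac : G.IsAcyclic) {x z p q : V} (hxz : G.Adj x z)
    (hpq : G.Adj p q) (hp : p ∉ Side G x z) (hq : q ∈ Side G x z) : p = x ∧ q = z := by
  have hp' : (G.deleteEdges {s(x, z)}).Reachable p x := not_not.mp hp
  by_cases he : s(p, q) = s(x, z)
  · rcases Sym2.eq_iff.mp he with ⟨rfl, rfl⟩ | ⟨rfl, rfl⟩
    · exact ⟨rfl, rfl⟩
    · exact absurd (mem_Side hac hxz) hp
  · have hadj : (G.deleteEdges {s(x, z)}).Adj q p := by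
      rw [SimpleGraph.deleteEdges_adj]
      refine ⟨hpq.symm, ?_⟩
      simpa [Sym2.eq_swap] using he
    exact absurd (hadj.reachable.trans hp') hq

lemma Side_crossing_out (hac : G.IsAcyclic) {x z p q : V} (hxz : G.Adj x z)
    (hpq : G.Adj p q) (hp : p ∈ Side G x z) (hq : q ∉ Side G x z) : p = z ∧ q = x := by
  obtain ⟨h1, h2⟩ := Side_crossing hac hxz hpq.symm hq hp
  exact ⟨h2, h1⟩

end TreeSide

section WalkSide

variable (τ : V → V → V) (Z : Set V) (a : V) (ρ : V → V) {G : SimpleGraph V}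

lemma walk_enter (hτ : ValidMechanism G Z τ) (hρ : ValidConfig G Z ρ)
    (hac : G.IsAcyclic) {x z : V} (hxz : G.Adj x z) {n n' : ℕ} (hle : n ≤ n')
    (hGood : ∀ s < n', pos τ a ρ s ∉ Z)
    (hn : pos τ a ρ n ∉ Side G x z) (hn' : pos τ a ρ n' ∈ Side G x z) :
    ∃ k, n ≤ k ∧ k < n' ∧ pos τ a ρ k = x ∧ pos τ a ρ (k + 1) = z := by
  obtain ⟨j, hj, hQ, hQ1⟩ := exists_crossing'
    (Q := fun j => pos τ a ρ (n + j) ∉ Side G x z) (n := n' - n) hn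
    (by
      intro hc
      rw [show n + (n' - n) = n' by omega] at hc
      exact hc hn')
  have hk2 : n + j < n' := by omega
  have hcr := Side_crossing hac hxz
    (adj_pos_succ τ Z a ρ hτ hρ (hGood _ hk2)) hQ (not_not.mp hQ1)
  exact ⟨n + j, Nat.le_add_right n j, hk2, hcr.1, hcr.2⟩

lemma walk_trap (hτ : ValidMechanism G Z τ) (hρ : ValidConfig G Z ρ)
    (hac : G.IsAcyclic) {x z : V} (hxz : G.Adj x z) {L : ℕ}
    (hbase : pos τ a ρ (L + 1) ∈ Side G x z)
    (hstop : ∀ σ, (∀ s < σ + 1, pos τ a ρ s ∉ Z) → L + 1 ≤ σ →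
      ¬ (pos τ a ρ σ = z ∧ pos τ a ρ (σ + 1) = x)) :
    ∀ σ, (∀ s < σ, pos τ a ρ s ∉ Z) → L + 1 ≤ σ → pos τ a ρ σ ∈ Side G x z := by
  intro σ
  induction σ with
  | zero => omega
  | succ σ ih =>
    intro hGσ1 hσ1
    rcases Nat.lt_or_ge L σ with h | h
    · -- L + 1 ≤ σ : use ih
      have hmem : pos τ a ρ σ ∈ Side G x z := ih (fun s hs => hGσ1 s (by omega)) h
      by_contra hq
      have := Side_crossing_out hac hxz
        (adj_pos_succ τ Z a ρ hτ hρ (hGσ1 σ (Nat.lt_succ_self σ))) hmem hq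
      exact hstop σ hGσ1 h this
    · have : σ = L := by omega
      rw [this]
      exact hbase

end WalkSide

end AuxiliaryLemmas

/-- on a locally finite tree, for a transient rotor walk with final rotor
configuration `ξ`, if `x = ξ^[i] a` lies on the maximal forward path from `a` in `ξ` and is
incomplete, then every vertex visited up to and including the last visit to `x` lies in
`W(ξ,x)`, the set of vertices with a directed `ξ`-path to `x`. -/
theorem range_subset_W_of_incomplete
    {V : Type*} [DecidableEq V]
    (G : SimpleGraph V) [G.LocallyFinite] (htree : G.IsTree)
    (Z : Set V) (τ : V → V → V) (hτ : ValidMechanism G Z τ)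
    (a : V) (ha : a ∉ Z) (ρ : V → V) (hρ : ValidConfig G Z ρ)
    (hwalk : IsTransientWalk τ Z a ρ)
    (i : ℕ) (hpath : ∀ j ≤ i, (finalConf τ Z a ρ)^[j] a ∉ Z)
    (hinc : Incomplete G (finalConf τ Z a ρ) ((finalConf τ Z a ρ)^[i] a)) :
    ∀ t ≤ lastVisit τ Z a ρ ((finalConf τ Z a ρ)^[i] a),
      pos τ a ρ t ∈ W (finalConf τ Z a ρ) ((finalConf τ Z a ρ)^[i] a) := by
  have hac : G.IsAcyclic := htree.IsAcyclic
  set ξ := finalConf τ Z a ρ with hξdef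
  set x := ξ^[i] a with hxdef
  -- `a` has a directed `ξ`-path to every vertex on the forward path
  have haW : ∀ j : ℕ, a ∈ W ξ (ξ^[j] a) := by
    intro j
    induction j with
    | zero => exact Relation.ReflTransGen.refl
    | succ j ih =>
      exact Relation.ReflTransGen.tail ih (Function.iterate_succ_apply' ξ j a).symm
  intro t ht
  by_cases hne : (LVset τ Z a ρ x).Nonempty
  swap
  · -- the last-visit set is empty: `lastVisit = 0` and `pos 0 = a`
    rw [Set.not_nonempty_iff_eq_empty] at hne
    rw [lastVisit_eq, hne, csSup_empty] at ht
    have ht0 : t = 0 := le_bot_iff.mp ht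
    rw [ht0]
    exact haW i
  have hxZ : x ∉ Z := hpath i le_rfl
  have hbdd := lvset_bddAbove τ Z a ρ hwalk hxZ
  set L := sSup (LVset τ Z a ρ x) with hLdef
  have hLmem : L ∈ LVset τ Z a ρ x := Nat.sSup_mem hne hbdd
  have hposL : pos τ a ρ L = x := hLmem.2
  have hGoodL1 : ∀ s < L + 1, pos τ a ρ s ∉ Z := by
    intro s hs
    rcases Nat.lt_succ_iff_lt_or_eq.mp hs with h | h
    · exact hLmem.1 s h
    · rw [h, hposL]; exact hxZ
  have hxle : ∀ {s : ℕ}, (∀ u < s, pos τ a ρ u ∉ Z) → pos τ a ρ s = x → s ≤ L :=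
    fun hG hp => le_csSup hbdd ⟨hG, hp⟩
  have hfc : ξ x = pos τ a ρ (L + 1) := finalConf_eq_pos τ Z a ρ hwalk hxZ hne
  set z := ξ x with hzdef
  have hadjxz : G.Adj x z := valid_finalConf τ Z a ρ hτ hρ hwalk x hxZ
  obtain ⟨y₀, hy₀adj, hy₀nst⟩ := hinc
  have hy₀nex : ξ x ≠ y₀ := fun h => hy₀nst (Relation.ReflTransGen.single (Or.inl h))
  have hy₀ny : ξ y₀ ≠ x := fun h => hy₀nst (Relation.ReflTransGen.single (Or.inr h))
  -- `y₀` is never visited at good times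
  have hY : ∀ m, (∀ s < m + 1, pos τ a ρ s ∉ Z) → pos τ a ρ m ≠ y₀ := by
    intro m hGm1 hpm
    have hy₀Z : y₀ ∉ Z := hpm ▸ hGm1 m (Nat.lt_succ_self m)
    have hbdd₀ := lvset_bddAbove τ Z a ρ hwalk hy₀Z
    have hne₀ : (LVset τ Z a ρ y₀).Nonempty := ⟨m, fun s hs => hGm1 s (by omega), hpm⟩
    set L₀ := sSup (LVset τ Z a ρ y₀) with hL₀def
    have hL₀mem : L₀ ∈ LVset τ Z a ρ y₀ := Nat.sSup_mem hne₀ hbdd₀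
    have hfc₀ : ξ y₀ = pos τ a ρ (L₀ + 1) := finalConf_eq_pos τ Z a ρ hwalk hy₀Z hne₀
    have hξy₀B : ξ y₀ ∈ Side G x y₀ := by
      by_contra h
      have hadj : G.Adj y₀ (ξ y₀) := valid_finalConf τ Z a ρ hτ hρ hwalk y₀ hy₀Z
      exact hy₀ny (Side_crossing_out hac hy₀adj hadj (mem_Side hac hy₀adj) h).2
    have htrap : ∀ σ, (∀ s < σ, pos τ a ρ s ∉ Z) → L₀ + 1 ≤ σ →
        pos τ a ρ σ ∈ Side G x y₀ := by
      refine walk_trap τ Z a ρ hτ hρ hac hy₀adj (hfc₀ ▸ hξy₀B) ?_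
      intro σ hGσ1 hσ hzx
      have : σ ≤ L₀ := le_csSup hbdd₀ ⟨fun s hs => hGσ1 s (by omega), hzx.1⟩
      omega
    have hLL₀ : L < L₀ := by
      have h1 : ¬ (L₀ + 1 ≤ L) := by
        intro h
        have := htrap L hLmem.1 h
        rw [hposL] at this
        exact not_mem_Side_self this
      have h2 : L ≠ L₀ := by
        intro h
        apply hy₀adj.ne
        rw [← hposL, h, hL₀mem.2]
      omega
    obtain ⟨k, hk1, hk2, hk3, hk4⟩ := walk_enter τ Z a ρ hτ hρ hac hy₀adj
      (le_of_lt hLL₀) hL₀mem.1 (by rw [hposL]; exact not_mem_Side_self)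
      (by rw [hL₀mem.2]; exact mem_Side hac hy₀adj)
    have hkL : k ≤ L := hxle (fun u hu => hL₀mem.1 u (by omega)) hk3
    have hkeq : k = L := le_antisymm hkL hk1
    apply hy₀nex
    rw [← hzdef, hfc, ← hkeq]
    exact hk4
  -- `a` is not on the `z`-side of the edge `{x,z}`
  have haA : a ∉ Side G x z := by
    intro haA
    obtain ⟨j, hj, hQ, hQ1⟩ := exists_crossing'
      (Q := fun j => ξ^[j] a ∈ Side G x z) (n := i)
      (by simpa using haA)
      (by
        show ξ^[i] a ∉ Side G x z
        rw [← hxdef]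
        exact not_mem_Side_self)
    have hjZ : ξ^[j] a ∉ Z := hpath j (le_of_lt hj)
    have hadj : G.Adj (ξ^[j] a) (ξ^[j + 1] a) := by
      rw [Function.iterate_succ_apply']
      exact valid_finalConf τ Z a ρ hτ hρ hwalk _ hjZ
    have hcr := Side_crossing_out hac hadjxz hadj hQ hQ1
    have hξz : ξ z = x := by
      rw [← hcr.1, ← Function.iterate_succ_apply' ξ j a]
      exact hcr.2
    have hzZ : z ∉ Z := hcr.1 ▸ hjZ
    have hbddz := lvset_bddAbove τ Z a ρ hwalk hzZ
    have hmemz : (L + 1) ∈ LVset τ Z a ρ z := ⟨hGoodL1, hfc.symm⟩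
    have hnez : (LVset τ Z a ρ z).Nonempty := ⟨L + 1, hmemz⟩
    set Lz := sSup (LVset τ Z a ρ z) with hLzdef
    have hLz1 : L + 1 ≤ Lz := le_csSup hbddz hmemz
    have hLzmem : Lz ∈ LVset τ Z a ρ z := Nat.sSup_mem hnez hbddz
    have hfcz : ξ z = pos τ a ρ (Lz + 1) := finalConf_eq_pos τ Z a ρ hwalk hzZ hnez
    have hGLz1 : ∀ u < Lz + 1, pos τ a ρ u ∉ Z := by
      intro u hu
      rcases Nat.lt_succ_iff_lt_or_eq.mp hu with h | h
      · exact hLzmem.1 u h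
      · rw [h, hLzmem.2]; exact hzZ
    have : Lz + 1 ≤ L := hxle hGLz1 (by rw [← hfcz, hξz])
    omega
  -- after time `L`, the walk is trapped on the `z`-side
  have hztrap : ∀ σ, (∀ s < σ, pos τ a ρ s ∉ Z) → L + 1 ≤ σ →
      pos τ a ρ σ ∈ Side G x z := by
    refine walk_trap τ Z a ρ hτ hρ hac hadjxz (by rw [← hfc]; exact mem_Side hac hadjxz) ?_
    intro σ hGσ1 hσ hzx
    have : σ + 1 ≤ L := hxle hGσ1 hzx.2
    omega
  -- before time `L`, the walk never enters the `z`-side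
  have hnopre : ∀ s, (∀ u < s, pos τ a ρ u ∉ Z) → s ≤ L → pos τ a ρ s ∉ Side G x z := by
    intro s hGs hsL hsA
    obtain ⟨k, _, hk2, hk3, hk4⟩ := walk_enter τ Z a ρ hτ hρ hac hadjxz
      (Nat.zero_le s) hGs (by rw [pos_zero]; exact haA) hsA
    have hkL : k < L := lt_of_lt_of_le hk2 hsL
    -- two exits from `x` in direction `z`: the rotor made a full turn, so `y₀` was visited
    have hp : (τ x)^[cnt τ a ρ x k + 1] (ρ x) = z := by
      rw [← pos_succ_iterate τ a ρ hk3]; exact hk4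
    have hq : (τ x)^[cnt τ a ρ x L + 1] (ρ x) = z := by
      rw [← pos_succ_iterate τ a ρ hposL]; exact hfc.symm
    set p := cnt τ a ρ x k + 1 with hpdef
    have hNlt : p ≤ cnt τ a ρ x L := by
      have h1 : cnt τ a ρ x (k + 1) = cnt τ a ρ x k + 1 := by
        rw [cnt_succ, if_pos hk3]
      have h2 : cnt τ a ρ x (k + 1) ≤ cnt τ a ρ x L := cnt_mono τ a ρ x hkL
      omega
    set c := (cnt τ a ρ x L + 1) - p with hcdef
    have hc : 1 ≤ c := by omega
    have hcz : (τ x)^[c] z = z := by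
      have h1 : (τ x)^[c + p] (ρ x) = z := by
        rw [show c + p = cnt τ a ρ x L + 1 by omega]; exact hq
      rwa [Function.iterate_add_apply, hp] at h1
    obtain ⟨m₀, hm₀⟩ := (hτ x hxZ).2 z hadjxz y₀ hy₀adj
    set r := m₀ % c with hrdef
    have hry : (τ x)^[r] z = y₀ := by
      have hper : (τ x)^[c * (m₀ / c)] z = z := by
        rw [Function.iterate_mul]
        exact Function.iterate_fixed hcz _
      calc (τ x)^[r] z = (τ x)^[r] ((τ x)^[c * (m₀ / c)] z) := by rw [hper]
        _ = (τ x)^[r + c * (m₀ / c)] z := (Function.iterate_add_apply _ _ _ _).symm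
        _ = (τ x)^[m₀] z := by rw [Nat.mod_add_div]
        _ = y₀ := hm₀
    have hrne : r ≠ 0 := by
      intro h
      rw [h, Function.iterate_zero_apply, hzdef] at hry
      exact hy₀nex hry
    have hrc : r < c := Nat.mod_lt _ (by omega)
    set e := p + r with hedef
    have heL : e ≤ cnt τ a ρ x L := by omega
    have hex : ∃ u, e ≤ cnt τ a ρ x u := ⟨L, heL⟩
    have ht₀ : e ≤ cnt τ a ρ x (Nat.find hex) := Nat.find_spec hex
    have ht₀pos : Nat.find hex ≠ 0 := by
      intro h
      rw [h, cnt_zero] at ht₀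
      omega
    obtain ⟨m, hm⟩ : ∃ m, Nat.find hex = m + 1 := ⟨Nat.find hex - 1, by omega⟩
    have hmlt : ¬ e ≤ cnt τ a ρ x m := Nat.find_min hex (by omega)
    have hsucc := cnt_succ τ a ρ x m
    rw [← hm] at hsucc
    have hpmx : pos τ a ρ m = x ∧ cnt τ a ρ x m + 1 = e := by
      by_cases h : pos τ a ρ m = x
      · rw [if_pos h] at hsucc
        exact ⟨h, by omega⟩
      · rw [if_neg h] at hsucc
        omega
    have hmL : m < L := by
      by_contra hcon
      have := cnt_mono τ a ρ x (show L ≤ m by omega)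
      omega
    have hy₀vis : pos τ a ρ (m + 1) = y₀ := by
      rw [pos_succ_iterate τ a ρ hpmx.1, hpmx.2, hedef,
        show p + r = r + p by omega, Function.iterate_add_apply, hp]
      exact hry
    exact hY (m + 1) (fun u hu => hGoodL1 u (by omega)) hy₀vis
  -- main downward induction
  have main : ∀ k u, u ≤ L → L - u ≤ k → pos τ a ρ u ∈ W ξ x := by
    intro k
    induction k with
    | zero =>
      intro u huL hk
      have : u = L := by omega
      rw [this, hposL]
      exact Relation.ReflTransGen.refl
    | succ k ih =>
      intro u huL hk
      rcases eq_or_lt_of_le huL with rfl | huL'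
      · rw [hposL]; exact Relation.ReflTransGen.refl
      · by_cases hvis : ∃ s', u < s' ∧ s' ≤ L ∧ pos τ a ρ s' = pos τ a ρ u
        · obtain ⟨s', h1, h2, h3⟩ := hvis
          have := ih s' h2 (by omega)
          rwa [h3] at this
        · have hvZ : pos τ a ρ u ∉ Z := hGoodL1 u (by omega)
          have hnev : (LVset τ Z a ρ (pos τ a ρ u)).Nonempty :=
            ⟨u, fun w hw => hGoodL1 w (by omega), rfl⟩
          have hbddv := lvset_bddAbove τ Z a ρ hwalk hvZ
          set Lv := sSup (LVset τ Z a ρ (pos τ a ρ u)) with hLvdef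
          have hLvmem : Lv ∈ LVset τ Z a ρ (pos τ a ρ u) := Nat.sSup_mem hnev hbddv
          have huLv : u ≤ Lv := le_csSup hbddv ⟨fun w hw => hGoodL1 w (by omega), rfl⟩
          rcases le_or_gt Lv L with hLvL | hLvL
          · have hLvu : Lv = u := by
              rcases eq_or_lt_of_le huLv with h | h
              · exact h.symm
              · exact absurd ⟨Lv, h, hLvL, hLvmem.2⟩ hvis
            have hfcv : ξ (pos τ a ρ u) = pos τ a ρ (Lv + 1) :=
              finalConf_eq_pos τ Z a ρ hwalk hvZ hnev
            rw [hLvu] at hfcv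
            exact Relation.ReflTransGen.head hfcv (ih (u + 1) (by omega) (by omega))
          · have hin : pos τ a ρ Lv ∈ Side G x z := hztrap Lv hLvmem.1 (by omega)
            rw [hLvmem.2] at hin
            exact absurd hin (hnopre u (fun w hw => hGoodL1 w (by omega)) huL)
  exact main (L - t) t (by rwa [lastVisit_eq] at ht) le_rfl

end RotorWalk
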